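/- Let F = GF(q), R = F[x_1,...,x_n], L the field equation ideal, and J an ideal with exactly one F-rational solution (a_1,...,a_n). Then J + L = ⟨x_1 - a_1, ..., x_n - a_n⟩. -/

import Mathlib

open MvPolynomial

section Aux

variable {F : Type} [Field F] [Fintype F] {n : ℕ}

private lemma aux_sub_eval_mem (b : Fin n → F) (p : MvPolynomial (Fin n) F) :
    p - C (eval b p) ∈
      Ideal.span (Set.range fun i : Fin n => (X i : MvPolynomial (Fin n) F) - C (b i)) := by
  induction p using MvPolynomial.induction_on with
  | C c => simp
  | add p q hp hq =>
      have h : p + q - C (eval b (p + q)) = (p - C (eval b p)) + (q - C (eval b q)) := by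
        rw [map_add, map_add]; ring
      rw [h]; exact Ideal.add_mem _ hp hq
  | mul_X p i hp =>
      have h : p * X i - C (eval b (p * X i))
          = p * (X i - C (b i)) + (p - C (eval b p)) * C (b i) := by
        rw [map_mul, eval_X, map_mul]; ring
      rw [h]
      exact Ideal.add_mem _
        (Ideal.mul_mem_left _ _ (Ideal.subset_span ⟨i, rfl⟩))
        (Ideal.mul_mem_right _ _ hp)

private lemma span_eq_vanishing (b : Fin n → F) :
    Ideal.span (Set.range fun i : Fin n => (X i : MvPolynomial (Fin n) F) - C (b i))
      = vanishingIdeal F {b} := by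
  apply le_antisymm
  · rw [Ideal.span_le]
    rintro _ ⟨i, rfl⟩
    rw [SetLike.mem_coe, mem_vanishingIdeal_singleton_iff, aeval_eq_eval]
    simp
  · intro p hp
    rw [mem_vanishingIdeal_singleton_iff, aeval_eq_eval] at hp
    have h := aux_sub_eval_mem b p
    rwa [hp, map_zero, sub_zero] at h

private lemma pow_card_sub_mem (q : ℕ) (hq : Fintype.card F = q)
    (f : MvPolynomial (Fin n) F) :
    f ^ q - f ∈
      Ideal.span (Set.range fun i : Fin n => (X i : MvPolynomial (Fin n) F) ^ q - X i) := by
  set L : Ideal (MvPolynomial (Fin n) F) :=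
    Ideal.span (Set.range fun i : Fin n => (X i : MvPolynomial (Fin n) F) ^ q - X i) with hLdef
  -- L is proper
  have hLproper : L ≠ ⊤ := by
    intro htop
    have hle : L ≤ vanishingIdeal F {(fun _ => 0 : Fin n → F)} := by
      rw [hLdef, Ideal.span_le]
      rintro _ ⟨i, rfl⟩
      rw [SetLike.mem_coe, mem_vanishingIdeal_singleton_iff, aeval_eq_eval]
      have h1 : 1 ≤ q := by
        rw [← hq]; exact Fintype.card_pos
      simp [zero_pow (by omega : q ≠ 0)]
    rw [htop, top_le_iff] at hle
    exact (inferInstance : (vanishingIdeal F {(fun _ => 0 : Fin n → F)}).IsMaximal).ne_top hle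
  haveI : Nontrivial (MvPolynomial (Fin n) F ⧸ L) := Ideal.Quotient.nontrivial_iff.mpr hLproper
  obtain ⟨k, hp, hcard⟩ := FiniteField.card F (ringChar F)
  haveI : Fact (Nat.Prime (ringChar F)) := ⟨hp⟩
  have hqk : q = ringChar F ^ (k : ℕ) := by rw [← hq, hcard]
  haveI : CharP (MvPolynomial (Fin n) F ⧸ L) (ringChar F) :=
    charP_of_injective_ringHom
      (RingHom.injective ((Ideal.Quotient.mk L).comp (C : F →+* MvPolynomial (Fin n) F)))
      (ringChar F)
  set π := Ideal.Quotient.mk L with hπ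
  have hX : ∀ i : Fin n, (π (X i)) ^ q = π (X i) := by
    intro i
    have h : π (X i ^ q - X i) = 0 :=
      Ideal.Quotient.eq_zero_iff_mem.2 (Ideal.subset_span ⟨i, rfl⟩)
    rwa [map_sub, map_pow, sub_eq_zero] at h
  have key : ∀ g : MvPolynomial (Fin n) F, π g ^ q = π g := by
    intro g
    induction g using MvPolynomial.induction_on with
    | C c =>
        have hc : c ^ q = c := by rw [← hq]; exact FiniteField.pow_card c
        rw [← map_pow, ← C_pow, hc]
    | add s t hs ht =>
        rw [map_add, hqk, add_pow_char_pow, ← hqk, hs, ht]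
    | mul_X s i hs =>
        rw [map_mul, mul_pow, hs, hX i]
  rw [← Ideal.Quotient.eq_zero_iff_mem, map_sub, map_pow, key, sub_self]

private lemma maximal_eq_vanishing (q : ℕ) (hq : Fintype.card F = q)
    (m : Ideal (MvPolynomial (Fin n) F)) (hm : m.IsMaximal)
    (hLm : Ideal.span
      (Set.range fun i : Fin n => (X i : MvPolynomial (Fin n) F) ^ q - X i) ≤ m) :
    ∃ b : Fin n → F, m = vanishingIdeal F {b} := by
  classical
  haveI := hm
  have hq1 : 1 < q := by rw [← hq]; exact Fintype.one_lt_card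
  set K := MvPolynomial (Fin n) F ⧸ m
  set φ : F →+* K := (Ideal.Quotient.mk m).comp (C : F →+* MvPolynomial (Fin n) F) with hφ
  set P : Polynomial K := Polynomial.X ^ q - Polynomial.X with hP
  have hdeg : P.natDegree = q := by
    rw [hP, Polynomial.natDegree_sub_eq_left_of_natDegree_lt]
    · exact Polynomial.natDegree_X_pow q
    · rw [Polynomial.natDegree_X, Polynomial.natDegree_X_pow]; omega
  have hP0 : P ≠ 0 := by
    intro h
    rw [h, Polynomial.natDegree_zero] at hdeg; omega
  have hsub : (Finset.univ.image φ) ⊆ P.roots.toFinset := by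
    intro t ht
    obtain ⟨c, -, rfl⟩ := Finset.mem_image.1 ht
    rw [Multiset.mem_toFinset, Polynomial.mem_roots']
    refine ⟨hP0, ?_⟩
    have hc : c ^ q = c := by rw [← hq]; exact FiniteField.pow_card c
    simp [hP, Polynomial.IsRoot, ← map_pow, hc]
  have hcards : P.roots.toFinset.card ≤ (Finset.univ.image φ).card := by
    rw [Finset.card_image_of_injective _ φ.injective, Finset.card_univ, hq]
    exact le_trans (Multiset.toFinset_card_le _) (le_trans P.card_roots' hdeg.le)
  have heq : Finset.univ.image φ = P.roots.toFinset :=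
    Finset.eq_of_subset_of_card_le hsub hcards
  have hroot : ∀ i : Fin n, ∃ c : F, φ c = Ideal.Quotient.mk m (X i) := by
    intro i
    have hmem : Ideal.Quotient.mk m (X i) ∈ P.roots.toFinset := by
      rw [Multiset.mem_toFinset, Polynomial.mem_roots']
      refine ⟨hP0, ?_⟩
      have hXi : (Ideal.Quotient.mk m (X i)) ^ q = Ideal.Quotient.mk m (X i) := by
        have h : Ideal.Quotient.mk m (X i ^ q - X i) = 0 :=
          Ideal.Quotient.eq_zero_iff_mem.2 (hLm (Ideal.subset_span ⟨i, rfl⟩))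
        rwa [map_sub, map_pow, sub_eq_zero] at h
      simp [hP, Polynomial.IsRoot, hXi]
    rw [← heq] at hmem
    obtain ⟨c, -, hc⟩ := Finset.mem_image.1 hmem
    exact ⟨c, hc⟩
  choose b hb using hroot
  refine ⟨b, ?_⟩
  have hle : Ideal.span (Set.range fun i : Fin n =>
      (X i : MvPolynomial (Fin n) F) - C (b i)) ≤ m := by
    rw [Ideal.span_le]
    rintro _ ⟨i, rfl⟩
    rw [SetLike.mem_coe, ← Ideal.Quotient.eq_zero_iff_mem, map_sub, ← hb i]
    simp [hφ]
  haveI : (Ideal.span (Set.range fun i : Fin n =>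
      (X i : MvPolynomial (Fin n) F) - C (b i))).IsMaximal := by
    rw [span_eq_vanishing]; infer_instance
  have := Ideal.IsMaximal.eq_of_le this hm.ne_top hle
  rw [← this, span_eq_vanishing]

end Aux

/-- If `V_F(J) = {(a₁,…,aₙ)}` is a singleton, then
`J + L = ⟨x₁ - a₁, …, xₙ - aₙ⟩`, where `L` is the field-equation ideal. -/
theorem stmt3 (F : Type) [Field F] [Fintype F] (q : ℕ) (hq : Fintype.card F = q)
    (n : ℕ) (J L : Ideal (MvPolynomial (Fin n) F))
    (hL : L = Ideal.span (Set.range fun i : Fin n => (X i : MvPolynomial (Fin n) F) ^ q - X i))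
    (a : Fin n → F)
    (hV : {b : Fin n → F | ∀ f ∈ J, (eval b) f = 0} = {a}) :
    J ⊔ L = Ideal.span (Set.range fun i : Fin n => (X i : MvPolynomial (Fin n) F) - C (a i)) := by
  have ha : ∀ f ∈ J, eval a f = 0 := by
    have h : a ∈ {b : Fin n → F | ∀ f ∈ J, (eval b) f = 0} := by rw [hV]; rfl
    exact h
  have hq1 : 1 < q := by rw [← hq]; exact Fintype.one_lt_card
  rw [span_eq_vanishing]
  apply le_antisymm
  · rw [sup_le_iff]
    constructor
    · intro f hf
      rw [mem_vanishingIdeal_singleton_iff, aeval_eq_eval]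
      exact ha f hf
    · rw [hL, Ideal.span_le]
      rintro _ ⟨i, rfl⟩
      rw [SetLike.mem_coe, mem_vanishingIdeal_singleton_iff, aeval_eq_eval]
      have hc : (a i) ^ q = a i := by rw [← hq]; exact FiniteField.pow_card (a i)
      simp [hc]
  · intro x hx
    rw [mem_vanishingIdeal_singleton_iff, aeval_eq_eval] at hx
    set g : MvPolynomial (Fin n) F := x ^ (q - 1) - 1 with hg
    have htop : (J ⊔ L) ⊔ Ideal.span {g} = ⊤ := by
      by_contra hne
      obtain ⟨m, hmmax, hle⟩ := Ideal.exists_le_maximal _ hne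
      have hLm : L ≤ m := le_trans (le_trans le_sup_right le_sup_left) hle
      obtain ⟨b, rfl⟩ := maximal_eq_vanishing q hq m hmmax (hL ▸ hLm)
      have hbV : b ∈ {c : Fin n → F | ∀ f ∈ J, (eval c) f = 0} := by
        intro f hf
        have hJm : J ≤ (J ⊔ L) ⊔ Ideal.span {g} :=
          le_trans le_sup_left le_sup_left
        exact (mem_vanishingIdeal_singleton_iff b f).1 (hle (hJm hf))
      have hba : b = a := by rw [hV] at hbV; exact hbV
      have hgm : g ∈ vanishingIdeal F ({b} : Set (Fin n → F)) :=
        hle (Ideal.mem_sup_right (Ideal.subset_span rfl))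
      rw [mem_vanishingIdeal_singleton_iff, aeval_eq_eval, hba, hg, map_sub, map_pow, hx, map_one,
        zero_pow (by omega : q - 1 ≠ 0), zero_sub] at hgm
      exact one_ne_zero (neg_eq_zero.1 hgm)
    have h1 : (1 : MvPolynomial (Fin n) F) ∈ (J ⊔ L) ⊔ Ideal.span {g} := by
      rw [htop]; exact Submodule.mem_top
    obtain ⟨y, hy, z, hz, hyz⟩ := Submodule.mem_sup.1 h1
    obtain ⟨w, rfl⟩ := Ideal.mem_span_singleton'.1 hz
    have hxq : x * x ^ (q - 1) = x ^ q := by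
      rw [← pow_succ']
      congr 1
      omega
    have hxg : x * g = x ^ q - x := by rw [hg, mul_sub, mul_one, hxq]
    have hx_eq : x = x * y + w * (x ^ q - x) := by
      rw [← hxg]
      calc x = x * (y + w * g) := by rw [hyz, mul_one]
        _ = x * y + w * (x * g) := by ring
    have hxmem : x ^ q - x ∈ L := hL ▸ pow_card_sub_mem q hq x
    rw [hx_eq]
    exact Ideal.add_mem _ (Ideal.mul_mem_left _ x hy)
      (Ideal.mul_mem_left _ w ((le_sup_right : L ≤ J ⊔ L) hxmem))
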